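/- Let p be a prime and q = p^e with p not dividing e. The polynomial Q(x) = x^p + x^{p-1} + ... + x - 1 over F_q is separable. -/

import Mathlib

open Polynomial

theorem stmt_8 (p e q : ℕ) (hp : p.Prime) (he : 0 < e) (hpe : ¬ p ∣ e)
    (hq : q = p ^ e)
    (F : Type) [Field F] [Fintype F] (hF : Fintype.card F = q) :
    ((∑ i ∈ Finset.Icc 1 p, (X : F[X]) ^ i) - 1).Separable := by
  haveI : Fact p.Prime := ⟨hp⟩
  have hchar : CharP F p := by
    obtain ⟨r, hr⟩ := CharP.exists F
    haveI := hr
    obtain ⟨n, hr', hcard⟩ := FiniteField.card F r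
    have hpr : p = r := by
      have hdvd : p ∣ r ^ (n : ℕ) := by
        rw [← hcard, hF, hq]; exact dvd_pow_self p he.ne'
      exact (Nat.prime_dvd_prime_iff_eq hp hr').mp (hp.dvd_of_dvd_pow hdvd)
    rwa [hpr]
  haveI := hchar
  haveI : CharP F[X] p := Polynomial.instCharP p  -- may not be the name
  have hp2 := hp.two_le
  obtain ⟨k, hk⟩ : ∃ k, p = k + 2 := ⟨p - 2, by omega⟩
  have hX1 : (X - 1 : F[X]) ≠ 0 := by
    simpa using X_sub_C_ne_zero (1 : F)
  -- geometric sum identity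
  have h1 : ∑ i ∈ Finset.range p, (X : F[X]) ^ i = (X - 1) ^ (k + 1) := by
    apply mul_right_cancel₀ hX1
    rw [geom_sum_mul]
    have : ((X : F[X]) - 1) ^ (k + 1) * (X - 1) = (X - 1) ^ p := by
      rw [hk]; ring
    rw [this, sub_pow_char, one_pow]
  have h2 : ∑ i ∈ Finset.Icc 1 p, (X : F[X]) ^ i = X * (X - 1) ^ (k + 1) := by
    rw [← h1, Finset.mul_sum, show Finset.Icc 1 p = Finset.Ico 1 (p+1) by rw [Finset.Ico_add_one_right_eq_Icc],
      Finset.sum_Ico_eq_sum_range]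
    simp [pow_succ, pow_add, mul_comm]
  rw [h2]
  -- derivative
  have hd : derivative (X * ((X : F[X]) - 1) ^ (k + 1) - 1) = -(X - 1) ^ k := by
    have hcast : (C (((k : ℕ) + 1 : ℕ) : F) : F[X]) = -1 := by
      have h0 : ((p : ℕ) : F) = 0 := CharP.cast_eq_zero F p
      rw [hk] at h0
      have : (((k : ℕ) + 1 : ℕ) : F) = -1 := by push_cast at h0 ⊢; linear_combination h0
      rw [this]; simp
    simp only [derivative_sub, derivative_one, derivative_mul, derivative_X,
      derivative_pow, derivative_sub, derivative_one, sub_zero, one_mul, mul_one,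
      Nat.add_sub_cancel]
    rw [hcast]
    ring
  rw [Polynomial.separable_def, hd]
  refine (IsCoprime.pow_right ?_).neg_right
  exact ⟨-1, X * (X - 1) ^ k, by ring⟩
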